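/- Let G be a locally compact, σ-compact group and c ≥ 1. If G has Property (FH)_c, then G has Property (T)_c. -/

import Mathlib

open scoped ENNReal
open MeasureTheory

structure HilbRep (G : Type*) [Group G] [TopologicalSpace G] where
  (space : Type*)
  [normedAddCommGroup : NormedAddCommGroup space]
  [innerProductSpace : InnerProductSpace ℂ space]
  [completeSpace : CompleteSpace space]
  toFun : G →* (space →L[ℂ] space)ˣ

attribute [instance] HilbRep.normedAddCommGroup HilbRep.innerProductSpace HilbRep.completeSpace

namespace HilbRep

variable {G : Type*} [Group G] [TopologicalSpace G]

/-- The bounded invertible operator associated to a group element. -/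
def op (π : HilbRep G) (s : G) : π.space →L[ℂ] π.space :=
  (π.toFun s : π.space →L[ℂ] π.space)

/-- The representation is uniformly bounded by `c`. -/
def IsUB (π : HilbRep G) (c : ℝ) : Prop := ∀ s : G, ‖π.op s‖ ≤ c

/-- The representation is continuous for the strong operator topology. -/
def IsSOTContinuous (π : HilbRep G) : Prop :=
  ∀ ξ : π.space, Continuous fun s : G => π.op s ξ

/-- `π ∈ R_c(G)`: strongly continuous and uniformly bounded by `c`. -/
def IsRc (π : HilbRep G) (c : ℝ) : Prop := π.IsUB c ∧ π.IsSOTContinuous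

/-- `π` almost has invariant vectors. -/
def AlmostInvariantVectors (π : HilbRep G) : Prop :=
  ∀ Q : Set G, IsCompact Q → ∀ ε : ℝ, 0 < ε →
    ∃ ξ : π.space, ∀ s ∈ Q, ‖π.op s ξ - ξ‖ < ε * ‖ξ‖

/-- `π` has a nonzero invariant vector. -/
def HasInvariantVector (π : HilbRep G) : Prop :=
  ∃ ξ : π.space, ξ ≠ 0 ∧ ∀ s : G, π.op s ξ = ξ

end HilbRep

universe u v

/-- Property (T)_c. -/
def HasPropertyT (G : Type u) [Group G] [TopologicalSpace G] (c : ℝ) : Prop :=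
  ∀ π : HilbRep.{u, v} G, π.IsRc c → π.AlmostInvariantVectors → π.HasInvariantVector

/-- Property (FH)_c: every continuous affine action with linear part in `R_c(G)`
has a fixed point. -/
def HasPropertyFH (G : Type u) [Group G] [TopologicalSpace G] (c : ℝ) : Prop :=
  ∀ π : HilbRep.{u, v} G, π.IsRc c → ∀ b : G → π.space, Continuous b →
    (∀ s t : G, b (s * t) = π.op s (b t) + b s) →
    ∃ x : π.space, ∀ s : G, π.op s x + b s = x

set_option linter.unusedSectionVars false
set_option maxHeartbeats 1000000

open Filter

section DiagAux

variable {H : Type*} [NormedAddCommGroup H] [InnerProductSpace ℂ H] [CompleteSpace H]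

lemma two_toReal' : ((2 : ℝ≥0∞)).toReal = ((2:ℕ):ℝ) := by norm_num

lemma memlp_map (T : H →L[ℂ] H) (f : lp (fun _ : ℕ => H) 2) :
    Memℓp (fun n => T (f n)) 2 := by
  apply memℓp_gen
  have hs : Summable (fun n => ‖f n‖ ^ (2:ℝ≥0∞).toReal) :=
    (lp.memℓp f).summable (by norm_num)
  refine Summable.of_nonneg_of_le (fun n => Real.rpow_nonneg (norm_nonneg _) _)
    (fun n => ?_) (hs.mul_left (‖T‖ ^ (2:ℝ≥0∞).toReal))
  calc ‖T (f n)‖ ^ (2:ℝ≥0∞).toReal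
      ≤ (‖T‖ * ‖f n‖) ^ (2:ℝ≥0∞).toReal :=
        Real.rpow_le_rpow (norm_nonneg _) (T.le_opNorm _) (by norm_num)
    _ = ‖T‖ ^ (2:ℝ≥0∞).toReal * ‖f n‖ ^ (2:ℝ≥0∞).toReal :=
        Real.mul_rpow (norm_nonneg _) (norm_nonneg _)

lemma diag_norm_le (T : H →L[ℂ] H) (f : lp (fun _ : ℕ => H) 2) :
    ‖(⟨fun n => T (f n), memlp_map T f⟩ : lp (fun _ : ℕ => H) 2)‖ ≤ ‖T‖ * ‖f‖ := by
  set g : lp (fun _ : ℕ => H) 2 := ⟨fun n => T (f n), memlp_map T f⟩ with hg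
  have h2 : (0:ℝ) < (2:ℝ≥0∞).toReal := by norm_num
  have key : ‖g‖ ^ (2:ℝ≥0∞).toReal ≤ (‖T‖ * ‖f‖) ^ (2:ℝ≥0∞).toReal := by
    rw [lp.norm_rpow_eq_tsum h2]
    have hbd : ∀ n, ‖(g : ∀ _ : ℕ, H) n‖ ^ (2:ℝ≥0∞).toReal
        ≤ ‖T‖ ^ (2:ℝ≥0∞).toReal * ‖f n‖ ^ (2:ℝ≥0∞).toReal := by
      intro n
      rw [show (g : ∀ _ : ℕ, H) n = T (f n) from rfl,
        ← Real.mul_rpow (norm_nonneg _) (norm_nonneg _)]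
      exact Real.rpow_le_rpow (norm_nonneg _) (T.le_opNorm _) (by norm_num)
    have hs : Summable (fun n => ‖f n‖ ^ (2:ℝ≥0∞).toReal) :=
      (lp.memℓp f).summable h2
    calc (∑' n, ‖(g : ∀ _ : ℕ, H) n‖ ^ (2:ℝ≥0∞).toReal)
        ≤ ∑' n, ‖T‖ ^ (2:ℝ≥0∞).toReal * ‖f n‖ ^ (2:ℝ≥0∞).toReal :=
          Summable.tsum_le_tsum hbd ((lp.memℓp g).summable h2) (hs.mul_left _)
      _ = ‖T‖ ^ (2:ℝ≥0∞).toReal * ∑' n, ‖f n‖ ^ (2:ℝ≥0∞).toReal := tsum_mul_left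
      _ = ‖T‖ ^ (2:ℝ≥0∞).toReal * ‖f‖ ^ (2:ℝ≥0∞).toReal := by
          rw [← lp.norm_rpow_eq_tsum h2]
      _ = (‖T‖ * ‖f‖) ^ (2:ℝ≥0∞).toReal :=
          (Real.mul_rpow (norm_nonneg _) (norm_nonneg _)).symm
  rw [two_toReal', Real.rpow_natCast, Real.rpow_natCast] at key
  exact (pow_le_pow_iff_left₀ (norm_nonneg _)
    (mul_nonneg (norm_nonneg _) (norm_nonneg _)) (by norm_num)).mp key

/-- The diagonal operator on the `ℓ²`-sum. -/
noncomputable def diagL (T : H →L[ℂ] H) :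
    lp (fun _ : ℕ => H) 2 →L[ℂ] lp (fun _ : ℕ => H) 2 :=
  LinearMap.mkContinuous
    { toFun := fun f => ⟨fun n => T (f n), memlp_map T f⟩
      map_add' := fun f g => by
        apply lp.ext; funext n
        simp [lp.coeFn_add, Pi.add_apply]; rfl
      map_smul' := fun c f => by
        apply lp.ext; funext n
        simp [lp.coeFn_smul, Pi.smul_apply] }
    ‖T‖ (fun f => diag_norm_le T f)

@[simp] lemma diagL_apply (T : H →L[ℂ] H) (f : lp (fun _ : ℕ => H) 2) (n : ℕ) :
    (diagL T f : ∀ _ : ℕ, H) n = T (f n) := rfl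

lemma diagL_norm_le (T : H →L[ℂ] H) : ‖diagL T‖ ≤ ‖T‖ :=
  LinearMap.mkContinuous_norm_le _ (norm_nonneg T) _

lemma diagL_mul (T S : H →L[ℂ] H) : diagL (T * S) = diagL T * diagL S := by
  ext f n
  rfl

lemma diagL_one : diagL (1 : H →L[ℂ] H) = 1 := by
  apply ContinuousLinearMap.ext; intro f
  apply lp.ext; funext n
  rfl

/-- single as element of the ℓ² sum -/
noncomputable def sgl (n : ℕ) (v : H) : lp (fun _ : ℕ => H) 2 :=
  lp.single 2 n v

lemma sgl_apply_self (n : ℕ) (v : H) : (sgl n v : ∀ _ : ℕ, H) n = v :=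
  lp.single_apply_self (E := fun _ : ℕ => H) 2 n v

lemma sgl_apply_ne (n : ℕ) (v : H) {j : ℕ} (h : j ≠ n) : (sgl n v : ∀ _ : ℕ, H) j = 0 :=
  lp.single_apply_ne (E := fun _ : ℕ => H) 2 n v h

lemma sgl_sub (n : ℕ) (a b : H) : sgl n (a - b) = sgl n a - sgl n b := by
  apply lp.ext; funext j
  by_cases h : j = n
  · subst h
    simp [lp.coeFn_sub, sgl_apply_self]
  · simp [lp.coeFn_sub, sgl_apply_ne _ _ h]

lemma norm_sgl (n : ℕ) (v : H) : ‖sgl n v‖ = ‖v‖ :=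
  lp.norm_single (E := fun _ : ℕ => H) (by norm_num) n v

lemma isometry_sgl (n : ℕ) : Isometry (sgl (H := H) n) :=
  Isometry.of_dist_eq fun a b => by
    rw [dist_eq_norm, dist_eq_norm, ← sgl_sub, norm_sgl]

lemma diagL_sgl (T : H →L[ℂ] H) (n : ℕ) (v : H) :
    diagL T (sgl n v) = sgl n (T v) := by
  apply lp.ext; funext j
  by_cases h : j = n
  · subst h
    simp [sgl_apply_self]
  · simp [sgl_apply_ne _ _ h]

/-- SOT-continuity transfers to the diagonal representation. -/
lemma diagL_sot {G : Type*} [TopologicalSpace G] {c : ℝ} (hc : 1 ≤ c)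
    (T : G → H →L[ℂ] H) (hUB : ∀ g, ‖T g‖ ≤ c)
    (hSOT : ∀ v : H, Continuous fun g => T g v)
    (x : lp (fun _ : ℕ => H) 2) :
    Continuous fun g => diagL (T g) x := by
  have hc0 : (0:ℝ) < c := lt_of_lt_of_le one_pos hc
  have hx : HasSum (fun i : ℕ => sgl i (x i)) x :=
    lp.hasSum_single (by norm_num) x
  have hten : Tendsto (fun N => ∑ i ∈ Finset.range N, sgl i (x i)) atTop (nhds x) :=
    hx.tendsto_sum_nat
  have hcontN : ∀ N : ℕ,
      Continuous fun g => diagL (T g) (∑ i ∈ Finset.range N, sgl i (x i)) := by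
    intro N
    have : (fun g => diagL (T g) (∑ i ∈ Finset.range N, sgl i (x i)))
        = fun g => ∑ i ∈ Finset.range N, sgl i (T g (x i)) := by
      funext g
      rw [map_sum]
      exact Finset.sum_congr rfl fun i _ => diagL_sgl _ _ _
    rw [this]
    exact continuous_finset_sum _ fun i _ =>
      (isometry_sgl i).continuous.comp (hSOT (x i))
  have huni : TendstoUniformly
      (fun N g => diagL (T g) (∑ i ∈ Finset.range N, sgl i (x i)))
      (fun g => diagL (T g) x) atTop := by
    rw [Metric.tendstoUniformly_iff]
    intro ε hε
    have : ∀ᶠ N in atTop,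
        dist (∑ i ∈ Finset.range N, sgl i (x i)) x < ε / c :=
      (Metric.tendsto_nhds.mp hten) _ (div_pos hε hc0)
    filter_upwards [this] with N hN g
    have h1 : dist (diagL (T g) x)
        (diagL (T g) (∑ i ∈ Finset.range N, sgl i (x i)))
        ≤ c * dist x (∑ i ∈ Finset.range N, sgl i (x i)) := by
      rw [dist_eq_norm, dist_eq_norm, ← map_sub]
      calc ‖diagL (T g) (x - ∑ i ∈ Finset.range N, sgl i (x i))‖
          ≤ ‖diagL (T g)‖ * ‖x - ∑ i ∈ Finset.range N, sgl i (x i)‖ :=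
            ContinuousLinearMap.le_opNorm _ _
        _ ≤ c * ‖x - ∑ i ∈ Finset.range N, sgl i (x i)‖ :=
            mul_le_mul_of_nonneg_right ((diagL_norm_le _).trans (hUB g)) (norm_nonneg _)
    calc dist (diagL (T g) x) (diagL (T g) (∑ i ∈ Finset.range N, sgl i (x i)))
        ≤ c * dist x (∑ i ∈ Finset.range N, sgl i (x i)) := h1
      _ < c * (ε / c) := by
          apply mul_lt_mul_of_pos_left _ hc0
          rw [dist_comm]; exact hN
      _ = ε := by field_simp
  exact huni.continuous (Eventually.of_forall hcontN).frequently

end DiagAux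

section RepAux

variable {G : Type*} [Group G] [TopologicalSpace G]

/-- The diagonal representation of `π` on the `ℓ²`-sum of countably many copies. -/
noncomputable def HilbRep.lpSum (π : HilbRep G) : HilbRep G where
  space := lp (fun _ : ℕ => π.space) 2
  toFun :=
    { toFun := fun g =>
        { val := diagL (π.op g)
          inv := diagL (π.op g⁻¹)
          val_inv := by
            have h : π.op g * π.op g⁻¹ = 1 := by
              have h1 : π.toFun g * π.toFun g⁻¹ = 1 := by
                rw [← map_mul]; simp
              have := congrArg Units.val h1
              simpa [HilbRep.op] using this
            rw [← diagL_mul, h, diagL_one]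
          inv_val := by
            have h : π.op g⁻¹ * π.op g = 1 := by
              have h1 : π.toFun g⁻¹ * π.toFun g = 1 := by
                rw [← map_mul]; simp
              have := congrArg Units.val h1
              simpa [HilbRep.op] using this
            rw [← diagL_mul, h, diagL_one] }
      map_one' := by
        apply Units.ext
        show diagL (π.op 1) = 1
        have h : π.op 1 = 1 := by
          have := congrArg Units.val (map_one π.toFun)
          simpa [HilbRep.op] using this
        rw [h, diagL_one]
      map_mul' := fun s t => by
        apply Units.ext
        show diagL (π.op (s * t)) = diagL (π.op s) * diagL (π.op t)
        have h : π.op (s * t) = π.op s * π.op t := by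
          have := congrArg Units.val (map_mul π.toFun s t)
          simpa [HilbRep.op] using this
        rw [h, diagL_mul] }

lemma HilbRep.lpSum_op (π : HilbRep G) (g : G) :
    π.lpSum.op g = diagL (π.op g) := rfl

end RepAux

theorem propertyT_of_propertyFH {G : Type u} [Group G] [TopologicalSpace G]
    [IsTopologicalGroup G] [LocallyCompactSpace G] [SigmaCompactSpace G]
    (c : ℝ) (hc : 1 ≤ c) (hFH : HasPropertyFH.{u, v} G c) :
    HasPropertyT.{u, v} G c := by
  intro π hRc hAIV
  obtain ⟨hUB, hSOT⟩ := hRc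
  have hc0 : (0:ℝ) < c := lt_of_lt_of_le one_pos hc
  classical
  set K := CompactExhaustion.choice G with hK
  -- Step 1: choose almost-invariant unit vectors
  have hxi : ∀ n : ℕ, ∃ ξ : π.space, ‖ξ‖ = 1 ∧
      ∀ s ∈ K n, ‖π.op s ξ - ξ‖ ≤ (1/2:ℝ)^n / ((n:ℝ)+1) := by
    intro n
    have hQ : IsCompact (K n ∪ {1} : Set G) := (K.isCompact n).union isCompact_singleton
    have hε : (0:ℝ) < (1/2:ℝ)^n / ((n:ℝ)+1) := by positivity
    obtain ⟨ξ, hξ⟩ := hAIV _ hQ _ hε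
    have h1 : π.op 1 ξ = ξ := by
      have h := congrArg Units.val (map_one π.toFun)
      show (π.toFun 1).val ξ = ξ
      rw [h]; rfl
    have hne : ξ ≠ 0 := by
      intro h0
      have h2 := hξ 1 (Set.mem_union_right _ rfl)
      rw [h1, sub_self, h0] at h2
      simp at h2
    have hnorm : (0:ℝ) < ‖ξ‖ := norm_pos_iff.mpr hne
    refine ⟨(‖ξ‖⁻¹ : ℝ) • ξ, ?_, ?_⟩
    · rw [norm_smul, Real.norm_eq_abs, abs_inv, abs_of_pos hnorm,
        inv_mul_cancel₀ hnorm.ne']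
    · intro s hs
      have hlt := hξ s (Set.mem_union_left _ hs)
      rw [ContinuousLinearMap.map_smul_of_tower, ← smul_sub, norm_smul,
        Real.norm_eq_abs, abs_inv, abs_of_pos hnorm]
      calc ‖ξ‖⁻¹ * ‖π.op s ξ - ξ‖
          ≤ ‖ξ‖⁻¹ * ((1/2:ℝ)^n / ((n:ℝ)+1) * ‖ξ‖) :=
            mul_le_mul_of_nonneg_left hlt.le (by positivity)
        _ = (1/2:ℝ)^n / ((n:ℝ)+1) := by field_simp
  choose ξ hξ1 hξ using hxi
  -- Step 2: the cocycle coordinates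
  set bf : ℕ → G → π.space := fun n g => ((n:ℝ)+1) • (π.op g (ξ n) - ξ n) with hbf
  have hbnd : ∀ m n : ℕ, m ≤ n → ∀ g ∈ K m, ‖bf n g‖ ≤ (1/2:ℝ)^n := by
    intro m n hmn g hg
    have hgn : g ∈ K n := K.subset hmn hg
    have hle := hξ n g hgn
    show ‖((n:ℝ)+1) • (π.op g (ξ n) - ξ n)‖ ≤ (1/2:ℝ)^n
    rw [norm_smul, Real.norm_eq_abs, abs_of_pos (show (0:ℝ) < (n:ℝ)+1 by positivity)]
    calc ((n:ℝ)+1) * ‖π.op g (ξ n) - ξ n‖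
        ≤ ((n:ℝ)+1) * ((1/2:ℝ)^n / ((n:ℝ)+1)) :=
          mul_le_mul_of_nonneg_left hle (by positivity)
      _ = (1/2:ℝ)^n := by
          rw [mul_comm, div_mul_cancel₀ _ (show ((n:ℝ)+1) ≠ 0 by positivity)]
  have hglob : ∀ (n : ℕ) (g : G), ‖bf n g‖ ≤ ((n:ℝ)+1) * (c+1) := by
    intro n g
    show ‖((n:ℝ)+1) • (π.op g (ξ n) - ξ n)‖ ≤ ((n:ℝ)+1) * (c+1)
    rw [norm_smul, Real.norm_eq_abs, abs_of_pos (show (0:ℝ) < (n:ℝ)+1 by positivity)]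
    refine mul_le_mul_of_nonneg_left ?_ (by positivity)
    calc ‖π.op g (ξ n) - ξ n‖ ≤ ‖π.op g (ξ n)‖ + ‖ξ n‖ := norm_sub_le _ _
      _ ≤ ‖π.op g‖ * ‖ξ n‖ + ‖ξ n‖ :=
          add_le_add_left ((π.op g).le_opNorm _) _
      _ ≤ c * 1 + 1 := by rw [hξ1 n]; simp [mul_one]; exact hUB g
      _ = c + 1 := by ring
  have hbfc : ∀ n : ℕ, Continuous fun g => bf n g := fun n =>
    ((hSOT (ξ n)).sub continuous_const).const_smul _
  -- Step 3: square-summability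
  have hsummable : ∀ g : G, Summable (fun n => ‖bf n g‖ ^ (2:ℝ≥0∞).toReal) := by
    intro g
    obtain ⟨m, hm⟩ := K.exists_mem g
    rw [← summable_nat_add_iff m]
    have hgeo : Summable (fun k : ℕ => ((1/2:ℝ))^k * (1/2:ℝ)^m) :=
      (summable_geometric_of_lt_one (by norm_num) (by norm_num)).mul_right _
    refine hgeo.of_nonneg_of_le (fun k => Real.rpow_nonneg (norm_nonneg _) _) (fun k => ?_)
    have h1 : ‖bf (k+m) g‖ ≤ (1/2:ℝ)^(k+m) := hbnd m (k+m) (Nat.le_add_left m k) g hm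
    have h2 : ((1/2:ℝ))^(k+m) ≤ 1 := pow_le_one₀ (by norm_num) (by norm_num)
    rw [two_toReal', Real.rpow_natCast]
    calc ‖bf (k+m) g‖^(2:ℕ) = ‖bf (k+m) g‖ * ‖bf (k+m) g‖ := sq _
      _ ≤ (1/2:ℝ)^(k+m) * 1 :=
          mul_le_mul h1 (h1.trans h2) (norm_nonneg _) (by positivity)
      _ = (1/2:ℝ)^k * (1/2:ℝ)^m := by rw [mul_one, pow_add]
  have hmem : ∀ g : G, Memℓp (fun n => bf n g) 2 := fun g => memℓp_gen (hsummable g)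
  set b : G → lp (fun _ : ℕ => π.space) 2 := fun g => ⟨fun n => bf n g, hmem g⟩ with hb
  -- Step 4: continuity of b
  have hcontOn : ∀ m : ℕ, ContinuousOn b (K m) := by
    intro m
    have hrepr : ∀ g : G, b g = ∑' n, sgl n (bf n g) := by
      intro g
      have h := lp.hasSum_single (E := fun _ : ℕ => π.space) (p := 2) (by norm_num) (b g)
      exact h.tsum_eq.symm
    set u : ℕ → ℝ := fun n => if n < m then ((n:ℝ)+1) * (c+1) else (1/2:ℝ)^n with hu
    have hus : Summable u := by
      rw [← summable_nat_add_iff m]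
      apply Summable.congr
        ((summable_geometric_of_lt_one (by norm_num : (0:ℝ) ≤ 1/2) (by norm_num)).mul_right
          ((1/2:ℝ)^m))
      intro k
      rw [hu]
      simp only
      rw [if_neg (by omega), pow_add]
    have hcont := continuousOn_tsum (f := fun (n : ℕ) (g : G) => sgl n (bf n g))
      (s := (K m : Set G)) (u := u)
      (fun n => ((isometry_sgl n).continuous.comp (hbfc n)).continuousOn)
      hus ?_
    · exact hcont.congr (fun g _ => hrepr g)
    · intro n g hg
      rw [norm_sgl]
      by_cases hn : n < m
      · rw [hu]; simp only [if_pos hn]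
        exact hglob n g
      · rw [hu]; simp only [if_neg hn]
        exact hbnd m n (le_of_not_gt hn) g hg
  have hbcont : Continuous b := by
    rw [continuous_iff_continuousAt]
    intro x
    obtain ⟨n, hn⟩ := K.exists_mem_nhds x
    exact (hcontOn n).continuousAt hn
  -- Step 5: cocycle identity
  have hop_mul : ∀ s t : G, π.op (s * t) = π.op s * π.op t := by
    intro s t
    have := congrArg Units.val (map_mul π.toFun s t)
    exact this
  have hcoc : ∀ s t : G, b (s * t) = diagL (π.op s) (b t) + b s := by
    intro s t
    apply lp.ext; funext n
    rw [lp.coeFn_add, Pi.add_apply, diagL_apply]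
    show bf n (s*t) = π.op s (bf n t) + bf n s
    show ((n:ℝ)+1) • (π.op (s*t) (ξ n) - ξ n)
      = π.op s (((n:ℝ)+1) • (π.op t (ξ n) - ξ n)) + ((n:ℝ)+1) • (π.op s (ξ n) - ξ n)
    rw [ContinuousLinearMap.map_smul_of_tower, ← smul_add]
    congr 1
    rw [map_sub, hop_mul s t, ContinuousLinearMap.mul_apply]
    abel
  -- Step 6: apply (FH)
  have hUB' : (π.lpSum).IsUB c := fun s => (diagL_norm_le _).trans (hUB s)
  have hSOT' : (π.lpSum).IsSOTContinuous := fun x =>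
    diagL_sot hc (fun g => π.op g) hUB hSOT x
  obtain ⟨x, hx⟩ : ∃ x : lp (fun _ : ℕ => π.space) 2,
      ∀ s : G, diagL (π.op s) x + b s = x :=
    hFH π.lpSum ⟨hUB', hSOT'⟩ b hbcont hcoc
  -- Step 7: extract coordinates
  have hxcoord : ∀ (s : G) (n : ℕ),
      π.op s ((x : ∀ _ : ℕ, π.space) n) + bf n s = (x : ∀ _ : ℕ, π.space) n := by
    intro s n
    have h := congrArg (fun v : lp (fun _ : ℕ => π.space) 2 => (v : ∀ _ : ℕ, π.space) n) (hx s)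
    simp only at h
    rw [lp.coeFn_add, Pi.add_apply] at h
    exact h
  by_cases hexists : ∃ n : ℕ, (x : ∀ _ : ℕ, π.space) n + ((n:ℝ)+1) • ξ n ≠ 0
  · obtain ⟨n, hne⟩ := hexists
    refine ⟨_, hne, fun s => ?_⟩
    rw [map_add, ContinuousLinearMap.map_smul_of_tower]
    have h2 : π.op s ((x : ∀ _ : ℕ, π.space) n) = (x : ∀ _ : ℕ, π.space) n - bf n s :=
      eq_sub_of_add_eq (hxcoord s n)
    rw [h2]
    show (x : ∀ _ : ℕ, π.space) n - ((n:ℝ)+1) • (π.op s (ξ n) - ξ n)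
        + ((n:ℝ)+1) • π.op s (ξ n) = (x : ∀ _ : ℕ, π.space) n + ((n:ℝ)+1) • ξ n
    rw [smul_sub]
    abel
  · exfalso
    push_neg at hexists
    obtain ⟨n, hn⟩ := exists_nat_ge ‖x‖
    have hxn : (x : ∀ _ : ℕ, π.space) n = -(((n:ℝ)+1) • ξ n) :=
      eq_neg_of_add_eq_zero_left (hexists n)
    have hnx : ‖(x : ∀ _ : ℕ, π.space) n‖ = (n:ℝ)+1 := by
      rw [hxn, norm_neg, norm_smul, Real.norm_eq_abs,
        abs_of_pos (show (0:ℝ) < (n:ℝ)+1 by positivity), hξ1 n, mul_one]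
    have hle : ‖(x : ∀ _ : ℕ, π.space) n‖ ≤ ‖x‖ :=
      lp.norm_apply_le_norm (by norm_num) x n
    rw [hnx] at hle
    linarith
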